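/- arXiv:2604.23904 — 3 statements merged into one kernel-verified Lean document; each statement's English description precedes it below -/
import Mathlib

section
/- Let (Ω, μ) be a probability space and let Q_f, Q* : {0,1} × Ω → (0,1) be measurable. Define the contrasts Δ_f(w) = Q_f(1,w) − Q_f(0,w) and Δ*(w) = Q*(1,w) − Q*(0,w), and the balanced Bernoulli KL outcome loss L_Y = ∫_Ω Σ_{a∈{0,1}} [Q*(a,w)·log(Q*(a,w)/Q_f(a,w)) + (1−Q*(a,w))·log((1−Q*(a,w))/(1−Q_f(a,w)))] dμ(w). Then (∫_Ω (Δ_f(w) − Δ*(w))² dμ(w))^{1/2} ≤ 2·√(L_Y). -/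
open MeasureTheory
open Real Set

lemma G_hasDeriv (p : ℝ) (x : ℝ) (hx0 : 0 < x) (hx1 : x < 1) :
    HasDerivAt (fun x => -(p * Real.log x) - (1-p) * Real.log (1-x) - 2*(x-p)^2)
      ((x - p) * (1/(x*(1-x)) - 4)) x := by
  have h1 : HasDerivAt (fun x : ℝ => Real.log x) (1/x) x := by
    simpa using Real.hasDerivAt_log hx0.ne'
  have h2 : HasDerivAt (fun x : ℝ => Real.log (1-x)) (-(1/(1-x))) x := by
    have : HasDerivAt (fun x : ℝ => (1:ℝ) - x) (-1) x := by
      simpa using (hasDerivAt_id x).const_sub 1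
    have := (Real.hasDerivAt_log (by linarith : (1:ℝ) - x ≠ 0)).comp x this
    exact this.congr_deriv (by ring)
  have h3 : HasDerivAt (fun x : ℝ => 2*(x-p)^2) (4*(x-p)) x := by
    have : HasDerivAt (fun x : ℝ => x - p) 1 x := (hasDerivAt_id x).sub_const p
    have := (this.pow 2).const_mul 2
    exact this.congr_deriv (by norm_num; ring)
  have := (((h1.const_mul p).neg).sub (h2.const_mul (1-p))).sub h3
  refine this.congr_deriv ?_
  have hx : x ≠ 0 := hx0.ne'
  have hx1' : (1:ℝ) - x ≠ 0 := by linarith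
  field_simp
  ring

lemma bern_pinsker {p q : ℝ} (hp : p ∈ Ioo (0:ℝ) 1) (hq : q ∈ Ioo (0:ℝ) 1) :
    2*(p-q)^2 ≤ p * Real.log (p/q) + (1-p) * Real.log ((1-p)/(1-q)) := by
  obtain ⟨hp0, hp1⟩ := hp
  obtain ⟨hq0, hq1⟩ := hq
  set G : ℝ → ℝ := fun x => -(p * Real.log x) - (1-p) * Real.log (1-x) - 2*(x-p)^2 with hG
  have key : G p ≤ G q := by
    have hdiff : ∀ x ∈ Ioo (0:ℝ) 1, HasDerivAt G ((x - p) * (1/(x*(1-x)) - 4)) x :=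
      fun x hx => G_hasDeriv p x hx.1 hx.2
    have hdiffOn : DifferentiableOn ℝ G (Ioo (0:ℝ) 1) :=
      fun x hx => (hdiff x hx).differentiableAt.differentiableWithinAt
    have hcont : ContinuousOn G (Ioo (0:ℝ) 1) := hdiffOn.continuousOn
    have hfac : ∀ x ∈ Ioo (0:ℝ) 1, 0 ≤ 1/(x*(1-x)) - 4 := by
      intro x hx
      have h1 : 0 < x*(1-x) := mul_pos hx.1 (by linarith [hx.2])
      have h2 : x*(1-x) ≤ 1/4 := by nlinarith [sq_nonneg (x - 1/2)]
      have : (4:ℝ) ≤ 1/(x*(1-x)) := by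
        rw [le_div_iff₀ h1]; linarith
      linarith
    rcases lt_trichotomy p q with h | h | h
    · -- G monotone on [p,q]
      have hsub : Icc p q ⊆ Ioo (0:ℝ) 1 := fun x hx => ⟨lt_of_lt_of_le hp0 hx.1, lt_of_le_of_lt hx.2 hq1⟩
      have hmono : MonotoneOn G (Icc p q) := by
        apply monotoneOn_of_deriv_nonneg (convex_Icc p q) (hcont.mono hsub)
        · intro x hx
          rw [interior_Icc] at hx
          exact (hdiff x (hsub (Ioo_subset_Icc_self hx))).differentiableAt.differentiableWithinAt
        · intro x hx
          rw [interior_Icc] at hx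
          rw [(hdiff x (hsub (Ioo_subset_Icc_self hx))).deriv]
          exact mul_nonneg (by linarith [hx.1]) (hfac x (hsub (Ioo_subset_Icc_self hx)))
      exact hmono (left_mem_Icc.2 h.le) (right_mem_Icc.2 h.le) h.le
    · simp [h]
    · -- G antitone on [q,p]
      have hsub : Icc q p ⊆ Ioo (0:ℝ) 1 := fun x hx => ⟨lt_of_lt_of_le hq0 hx.1, lt_of_le_of_lt hx.2 hp1⟩
      have hanti : AntitoneOn G (Icc q p) := by
        apply antitoneOn_of_deriv_nonpos (convex_Icc q p) (hcont.mono hsub)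
        · intro x hx
          rw [interior_Icc] at hx
          exact (hdiff x (hsub (Ioo_subset_Icc_self hx))).differentiableAt.differentiableWithinAt
        · intro x hx
          rw [interior_Icc] at hx
          rw [(hdiff x (hsub (Ioo_subset_Icc_self hx))).deriv]
          exact mul_nonpos_of_nonpos_of_nonneg (by linarith [hx.2]) (hfac x (hsub (Ioo_subset_Icc_self hx)))
      exact hanti (left_mem_Icc.2 h.le) (right_mem_Icc.2 h.le) h.le
  have hlog1 : Real.log (p/q) = Real.log p - Real.log q := Real.log_div hp0.ne' hq0.ne'
  have hlog2 : Real.log ((1-p)/(1-q)) = Real.log (1-p) - Real.log (1-q) :=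
    Real.log_div (by linarith) (by linarith)
  simp only [hG] at key
  rw [hlog1, hlog2]
  nlinarith [key]

/-- On a probability space `(Ω, μ)`, for measurable conditional
outcome models `Q_f, Q* : {0,1} × Ω → (0,1)` with contrasts
`Δ_f = Q_f(1,·) − Q_f(0,·)` and `Δ* = Q*(1,·) − Q*(0,·)`, and balanced Bernoulli
KL outcome loss `L_Y`, the contrast error satisfies
`‖Δ_f − Δ*‖_{L²(μ)} ≤ 2·√L_Y`. -/
theorem contrast_l2_from_balanced_kl {Ω : Type*} [MeasurableSpace Ω]
    (μ : Measure Ω) [IsProbabilityMeasure μ]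
    (Qf Qs : Bool → Ω → ℝ)
    (hQfm : ∀ a, Measurable (Qf a)) (hQsm : ∀ a, Measurable (Qs a))
    (hQf01 : ∀ a w, Qf a w ∈ Set.Ioo (0 : ℝ) 1)
    (hQs01 : ∀ a w, Qs a w ∈ Set.Ioo (0 : ℝ) 1)
    (kl : Bool → Ω → ℝ)
    (hkl : ∀ a w, kl a w =
      Qs a w * Real.log (Qs a w / Qf a w) +
        (1 - Qs a w) * Real.log ((1 - Qs a w) / (1 - Qf a w)))
    (hklint : Integrable (fun w => kl true w + kl false w) μ)
    (LY : ℝ) (hLY : LY = ∫ w, (kl true w + kl false w) ∂μ) :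
    Real.sqrt (∫ w,
        ((Qf true w - Qf false w) - (Qs true w - Qs false w)) ^ 2 ∂μ) ≤
      2 * Real.sqrt LY := by
  have hpt : ∀ w, ((Qf true w - Qf false w) - (Qs true w - Qs false w)) ^ 2
      ≤ kl true w + kl false w := by
    intro w
    have h1 := bern_pinsker (hQs01 true w) (hQf01 true w)
    have h0 := bern_pinsker (hQs01 false w) (hQf01 false w)
    rw [hkl true w, hkl false w]
    nlinarith [sq_nonneg ((Qf true w - Qs true w) + (Qf false w - Qs false w)), h1, h0]
  have hmeas : Measurable (fun w =>
      ((Qf true w - Qf false w) - (Qs true w - Qs false w)) ^ 2) :=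
    (((hQfm true).sub (hQfm false)).sub ((hQsm true).sub (hQsm false))).pow_const 2
  have hint : Integrable (fun w =>
      ((Qf true w - Qf false w) - (Qs true w - Qs false w)) ^ 2) μ := by
    apply Integrable.mono' (integrable_const (4:ℝ)) hmeas.aestronglyMeasurable
    filter_upwards with w
    have h1 := hQf01 true w; have h2 := hQf01 false w
    have h3 := hQs01 true w; have h4 := hQs01 false w
    rw [Real.norm_eq_abs, abs_of_nonneg (sq_nonneg _)]
    nlinarith [h1.1, h1.2, h2.1, h2.2, h3.1, h3.2, h4.1, h4.2]
  have hle : (∫ w, ((Qf true w - Qf false w) - (Qs true w - Qs false w)) ^ 2 ∂μ) ≤ LY := by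
    rw [hLY]
    exact integral_mono hint hklint hpt
  calc Real.sqrt (∫ w, ((Qf true w - Qf false w) - (Qs true w - Qs false w)) ^ 2 ∂μ)
      ≤ Real.sqrt LY := Real.sqrt_le_sqrt hle
    _ ≤ 2 * Real.sqrt LY := by nlinarith [Real.sqrt_nonneg LY]
end

section
/- Let (Ω, μ) be a probability space and let Q_hyb, Q* : {0,1} × Ω → (0,1) be measurable with contrasts Δ_hyb(w) = Q_hyb(1,w) − Q_hyb(0,w) and Δ*(w) = Q*(1,w) − Q*(0,w). Suppose the balanced Bernoulli KL outcome loss satisfies ∫_Ω Σ_{a∈{0,1}} [Q*(a,w)·log(Q*(a,w)/Q_hyb(a,w)) + (1−Q*(a,w))·log((1−Q*(a,w))/(1−Q_hyb(a,w)))] dμ(w) ≤ ε_Y for some ε_Y ≥ 0. Then (∫_Ω (Δ_hyb(w) − Δ*(w))² dμ(w))^{1/2} ≤ 2·√(ε_Y). -/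
open MeasureTheory

lemma bern_kl_pinsker (p q : ℝ) (hp : p ∈ Set.Ioo (0:ℝ) 1) (hq : q ∈ Set.Ioo (0:ℝ) 1) :
    2 * (p - q) ^ 2 ≤ p * Real.log (p / q) + (1 - p) * Real.log ((1 - p) / (1 - q)) := by
  obtain ⟨hp0, hp1⟩ := hp
  obtain ⟨hq0, hq1⟩ := hq
  set g : ℝ → ℝ := fun x => -(p * Real.log x) - (1 - p) * Real.log (1 - x) - 2 * (p - x) ^ 2
    with hg
  have hderiv : ∀ x ∈ Set.Ioo (0:ℝ) 1,
      HasDerivAt g (-(p / x) + (1 - p) / (1 - x) + 4 * (p - x)) x := by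
    intro x hx
    have hx0 : x ≠ 0 := ne_of_gt hx.1
    have hx1 : (1 : ℝ) - x ≠ 0 := by
      have := hx.2; intro h; linarith [sub_eq_zero.mp h]
    have h1 : HasDerivAt (fun x : ℝ => p * Real.log x) (p * x⁻¹) x :=
      (Real.hasDerivAt_log hx0).const_mul p
    have h2 : HasDerivAt (fun x : ℝ => Real.log (1 - x)) ((1 - x)⁻¹ * (-1)) x := by
      have hlin : HasDerivAt (fun x : ℝ => 1 - x) (-1) x := (hasDerivAt_id x).const_sub 1
      exact (Real.hasDerivAt_log hx1).comp x hlin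
    have h2' : HasDerivAt (fun x : ℝ => (1 - p) * Real.log (1 - x))
        ((1 - p) * ((1 - x)⁻¹ * (-1))) x := h2.const_mul (1 - p)
    have h3 : HasDerivAt (fun x : ℝ => (p - x) ^ 2) (2 * (p - x) ^ 1 * (-1)) x := by
      have hlin : HasDerivAt (fun x : ℝ => p - x) (-1) x := (hasDerivAt_id x).const_sub p
      exact hlin.pow 2
    have h3' : HasDerivAt (fun x : ℝ => 2 * (p - x) ^ 2) (2 * (2 * (p - x) ^ 1 * (-1))) x :=
      h3.const_mul 2
    have : HasDerivAt g (-(p * x⁻¹) - (1 - p) * ((1 - x)⁻¹ * -1) - 2 * (2 * (p - x) ^ 1 * -1)) x :=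
      (h1.neg.sub h2').sub h3'
    convert this using 1
    field_simp
    ring
  have hderivval : ∀ x ∈ Set.Ioo (0:ℝ) 1,
      deriv g x = -(p / x) + (1 - p) / (1 - x) + 4 * (p - x) := fun x hx =>
    (hderiv x hx).deriv
  have hsign : ∀ x ∈ Set.Ioo (0:ℝ) 1,
      (-(p / x) + (1 - p) / (1 - x) + 4 * (p - x)) * (x * (1 - x)) = (x - p) * (1 - 2 * x) ^ 2 := by
    intro x hx
    have hx0 : x ≠ 0 := ne_of_gt hx.1
    have hx1 : (1 : ℝ) - x ≠ 0 := by
      have := hx.2; intro h; linarith [sub_eq_zero.mp h]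
    field_simp
    ring
  -- reduce goal to g p ≤ g q
  have hkey : p * Real.log (p / q) + (1 - p) * Real.log ((1 - p) / (1 - q)) - 2 * (p - q) ^ 2
      = g q - g p := by
    have hlog1 : Real.log (p / q) = Real.log p - Real.log q :=
      Real.log_div (ne_of_gt hp0) (ne_of_gt hq0)
    have hlog2 : Real.log ((1 - p) / (1 - q)) = Real.log (1 - p) - Real.log (1 - q) :=
      Real.log_div (by linarith) (by linarith)
    simp only [hg, hlog1, hlog2]
    ring
  rw [← sub_nonneg, hkey, sub_nonneg]
  -- now show g p ≤ g q
  rcases lt_trichotomy p q with hlt | heq | hgt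
  · have hmono : MonotoneOn g (Set.Icc p q) := by
      apply monotoneOn_of_deriv_nonneg (convex_Icc p q)
      · intro x hx
        have hx01 : x ∈ Set.Ioo (0:ℝ) 1 := ⟨lt_of_lt_of_le hp0 hx.1, lt_of_le_of_lt hx.2 hq1⟩
        exact (hderiv x hx01).differentiableAt.continuousAt.continuousWithinAt
      · rw [interior_Icc]
        intro x hx
        have hx01 : x ∈ Set.Ioo (0:ℝ) 1 := ⟨lt_trans hp0 hx.1, lt_trans hx.2 hq1⟩
        exact ((hderiv x hx01).differentiableAt).differentiableWithinAt
      · rw [interior_Icc]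
        intro x hx
        have hx01 : x ∈ Set.Ioo (0:ℝ) 1 := ⟨lt_trans hp0 hx.1, lt_trans hx.2 hq1⟩
        rw [hderivval x hx01]
        have hpos : 0 < x * (1 - x) := mul_pos hx01.1 (by linarith [hx01.2])
        have := hsign x hx01
        nlinarith [sq_nonneg (1 - 2 * x), hx.1]
    exact hmono (Set.left_mem_Icc.mpr (le_of_lt hlt)) (Set.right_mem_Icc.mpr (le_of_lt hlt))
      (le_of_lt hlt)
  · rw [heq]
  · have hmono : AntitoneOn g (Set.Icc q p) := by
      apply antitoneOn_of_deriv_nonpos (convex_Icc q p)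
      · intro x hx
        have hx01 : x ∈ Set.Ioo (0:ℝ) 1 := ⟨lt_of_lt_of_le hq0 hx.1, lt_of_le_of_lt hx.2 hp1⟩
        exact (hderiv x hx01).differentiableAt.continuousAt.continuousWithinAt
      · rw [interior_Icc]
        intro x hx
        have hx01 : x ∈ Set.Ioo (0:ℝ) 1 := ⟨lt_trans hq0 hx.1, lt_trans hx.2 hp1⟩
        exact ((hderiv x hx01).differentiableAt).differentiableWithinAt
      · rw [interior_Icc]
        intro x hx
        have hx01 : x ∈ Set.Ioo (0:ℝ) 1 := ⟨lt_trans hq0 hx.1, lt_trans hx.2 hp1⟩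
        rw [hderivval x hx01]
        have hpos : 0 < x * (1 - x) := mul_pos hx01.1 (by linarith [hx01.2])
        have := hsign x hx01
        nlinarith [sq_nonneg (1 - 2 * x), hx.2]
    exact hmono (Set.left_mem_Icc.mpr (le_of_lt hgt)) (Set.right_mem_Icc.mpr (le_of_lt hgt))
      (le_of_lt hgt)

/-- On a probability space `(Ω, μ)`, for measurable conditional
outcome models `Q_hyb, Q* : {0,1} × Ω → (0,1)`, if the balanced Bernoulli KL
outcome loss of the hybrid model satisfies
`∫ Σ_{a∈{0,1}} KL(Bern(Q*(a,w)) ‖ Bern(Q_hyb(a,w))) dμ(w) ≤ ε_Y` for some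
`ε_Y ≥ 0`, then the contrast error satisfies
`‖Δ_hyb − Δ*‖_{L²(μ)} ≤ 2·√ε_Y`. -/
theorem hybrid_contrast_l2_from_outcome_loss {Ω : Type*} [MeasurableSpace Ω]
    (μ : Measure Ω) [IsProbabilityMeasure μ]
    (Qhyb Qs : Bool → Ω → ℝ)
    (hQhm : ∀ a, Measurable (Qhyb a)) (hQsm : ∀ a, Measurable (Qs a))
    (hQh01 : ∀ a w, Qhyb a w ∈ Set.Ioo (0 : ℝ) 1)
    (hQs01 : ∀ a w, Qs a w ∈ Set.Ioo (0 : ℝ) 1)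
    (kl : Bool → Ω → ℝ)
    (hkl : ∀ a w, kl a w =
      Qs a w * Real.log (Qs a w / Qhyb a w) +
        (1 - Qs a w) * Real.log ((1 - Qs a w) / (1 - Qhyb a w)))
    (hklint : Integrable (fun w => kl true w + kl false w) μ)
    (εY : ℝ) (hεY : 0 ≤ εY)
    (hloss : ∫ w, (kl true w + kl false w) ∂μ ≤ εY) :
    Real.sqrt (∫ w,
        ((Qhyb true w - Qhyb false w) - (Qs true w - Qs false w)) ^ 2 ∂μ) ≤
      2 * Real.sqrt εY := by
  -- pointwise bound
  have hpt : ∀ w, ((Qhyb true w - Qhyb false w) - (Qs true w - Qs false w)) ^ 2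
      ≤ kl true w + kl false w := by
    intro w
    have ht := bern_kl_pinsker (Qs true w) (Qhyb true w) (hQs01 true w) (hQh01 true w)
    have hf := bern_kl_pinsker (Qs false w) (Qhyb false w) (hQs01 false w) (hQh01 false w)
    rw [← hkl true w] at ht
    rw [← hkl false w] at hf
    nlinarith [sq_nonneg ((Qs true w - Qhyb true w) + (Qs false w - Qhyb false w))]
  -- integrability of the square
  have hmeas : Measurable (fun w =>
      ((Qhyb true w - Qhyb false w) - (Qs true w - Qs false w)) ^ 2) :=
    (((hQhm true).sub (hQhm false)).sub ((hQsm true).sub (hQsm false))).pow_const 2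
  have hint : Integrable (fun w =>
      ((Qhyb true w - Qhyb false w) - (Qs true w - Qs false w)) ^ 2) μ := by
    apply Integrable.mono' (integrable_const (16 : ℝ)) hmeas.aestronglyMeasurable
    filter_upwards with w
    have h1 := hQh01 true w
    have h2 := hQh01 false w
    have h3 := hQs01 true w
    have h4 := hQs01 false w
    rw [Real.norm_eq_abs, abs_of_nonneg (sq_nonneg _)]
    nlinarith [h1.1, h1.2, h2.1, h2.2, h3.1, h3.2, h4.1, h4.2]
  have hle : (∫ w, ((Qhyb true w - Qhyb false w) - (Qs true w - Qs false w)) ^ 2 ∂μ)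
      ≤ ∫ w, (kl true w + kl false w) ∂μ := integral_mono hint hklint hpt
  have h2 : (∫ w, ((Qhyb true w - Qhyb false w) - (Qs true w - Qs false w)) ^ 2 ∂μ) ≤ εY :=
    le_trans hle hloss
  have := Real.sqrt_le_sqrt h2
  nlinarith [Real.sqrt_nonneg εY, this]
end

section
/- Let (Ω, ℱ, P) be a probability space carrying random variables W (taking values in a measurable space), A taking values in {0,1}, and bounded real-valued potential outcomes Y⁰, Y¹, with observed outcome Y = A·Y¹ + (1−A)·Y⁰ (consistency). Assume ignorability: the pair (Y⁰, Y¹) is conditionally independent of A given σ(W); and positivity: the conditional expectation g(W) = E[A | σ(W)] satisfies 0 < g(W) < 1 almost surely. Then E[Y¹ − Y⁰] = E[ E[Y·A | σ(W)] / E[A | σ(W)] − E[Y·(1−A) | σ(W)] / E[(1−A) | σ(W)] ], i.e., the average treatment effect is identified from the observed-data distribution of (W, A, Y). -/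
open MeasureTheory ProbabilityTheory Set

open MeasureTheory ProbabilityTheory Set

lemma integral_restrict_eq_of_iio {Ω : Type*} [m0 : MeasurableSpace Ω]
    (ν : Measure Ω) [IsProbabilityMeasure ν] {Z : Ω → ℝ} (hZ : Measurable Z)
    {T : Set Ω} (hT : MeasurableSet T)
    (hq : ∀ q : ℚ, ν (Z ⁻¹' Iio (q : ℝ) ∩ T) = ν (Z ⁻¹' Iio (q : ℝ)) * ν T) :
    ∫ y, T.indicator Z y ∂ν = (ν T).toReal * ∫ y, Z y ∂ν := by
  rw [integral_indicator hT]
  have hmeas_eq : (ν.restrict T).map Z = (ν T) • (ν.map Z) := by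
    refine ext_of_generate_finite _
      (BorelSpace.measurable_eq.trans Real.borel_eq_generateFrom_Iio_rat)
      Real.isPiSystem_Iio_rat ?_ ?_
    · intro s hs
      simp only [mem_iUnion, mem_singleton_iff] at hs
      obtain ⟨q, rfl⟩ := hs
      rw [Measure.map_apply hZ measurableSet_Iio,
        Measure.restrict_apply (hZ measurableSet_Iio),
        Measure.smul_apply, Measure.map_apply hZ measurableSet_Iio, smul_eq_mul,
        hq q, mul_comm]
    · rw [Measure.map_apply hZ MeasurableSet.univ,
        Measure.restrict_apply (hZ MeasurableSet.univ),
        Measure.smul_apply, Measure.map_apply hZ MeasurableSet.univ, smul_eq_mul]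
      simp [measure_univ]
  have hZmap : ∫ y, (fun x : ℝ => x) y ∂((ν.restrict T).map Z) = ∫ x in T, Z x ∂ν :=
    integral_map hZ.aemeasurable measurable_id.aestronglyMeasurable
  have hZmap2 : ∫ y, (fun x : ℝ => x) y ∂(ν.map Z) = ∫ y, Z y ∂ν :=
    integral_map hZ.aemeasurable measurable_id.aestronglyMeasurable
  rw [← hZmap, hmeas_eq, integral_smul_measure, hZmap2, smul_eq_mul]

lemma integral_indicator_one_eq {Ω : Type*} [m0 : MeasurableSpace Ω]
    (ν : Measure Ω) [IsProbabilityMeasure ν] {T : Set Ω} (hT : MeasurableSet T) :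
    ∫ y, T.indicator (fun _ => (1:ℝ)) y ∂ν = (ν T).toReal := by
  rw [integral_indicator_const (1:ℝ) hT]
  simp [Measure.real]

lemma condexp_mul_of_condIndepFun_binary {Ω : Type*} [mΩ : MeasurableSpace Ω]
    [StandardBorelSpace Ω] {μ : Measure Ω} [IsProbabilityMeasure μ]
    {Z B : Ω → ℝ} (hZ : Measurable Z) (hB : Measurable B)
    {C : ℝ} (hZbd : ∀ ω, |Z ω| ≤ C)
    (hBbin : ∀ ω, B ω = 0 ∨ B ω = 1)
    (mW : MeasurableSpace Ω) (hmWle : mW ≤ mΩ)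
    (h : CondIndepFun mW hmWle Z B μ) :
    μ[fun ω => Z ω * B ω | mW] =ᵐ[μ] fun ω => (μ[Z | mW]) ω * (μ[B | mW]) ω := by
  set κ := condExpKernel (mΩ := mΩ) μ mW with hκ
  set T : Set Ω := B ⁻¹' {1} with hTdef
  have hT : MeasurableSet[mΩ] T := hB (measurableSet_singleton 1)
  have hZB : ∀ ω, Z ω * B ω = T.indicator Z ω := by
    intro ω
    rcases hBbin ω with h0 | h1
    · have : ω ∉ T := by simp [hTdef, h0]
      simp [indicator_of_notMem this, h0]
    · have : ω ∈ T := by simp [hTdef, h1]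
      simp [indicator_of_mem this, h1]
  have hBind : ∀ ω, B ω = T.indicator (fun _ => (1:ℝ)) ω := by
    intro ω
    rcases hBbin ω with h0 | h1
    · have : ω ∉ T := by simp [hTdef, h0]
      simp [indicator_of_notMem this, h0]
    · have : ω ∈ T := by simp [hTdef, h1]
      simp [indicator_of_mem this, h1]
  have hZint : Integrable Z μ :=
    Integrable.mono' (integrable_const C) (Measurable.aestronglyMeasurable (μ := μ) hZ)
      (Filter.Eventually.of_forall fun ω => by simpa using hZbd ω)
  have hBbd : ∀ ω, |B ω| ≤ 1 := by
    intro ω; rcases hBbin ω with h0 | h0 <;> simp [h0]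
  have hBint : Integrable B μ :=
    Integrable.mono' (integrable_const 1) (Measurable.aestronglyMeasurable (μ := μ) hB)
      (Filter.Eventually.of_forall fun ω => by simpa using hBbd ω)
  have hZBint : Integrable (fun ω => Z ω * B ω) μ :=
    Integrable.mono' (integrable_const C) (Measurable.aestronglyMeasurable (μ := μ) (hZ.mul hB))
      (Filter.Eventually.of_forall fun ω => by
        have h1 : |Z ω * B ω| = |Z ω| * |B ω| := abs_mul _ _
        have h2 : |Z ω| * |B ω| ≤ C * 1 :=
          mul_le_mul (hZbd ω) (hBbd ω) (abs_nonneg _) ((abs_nonneg _).trans (hZbd ω))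
        simp only [Real.norm_eq_abs, h1]
        simpa using h2)
  have hsets : ∀ (s : Set ℝ), MeasurableSet s →
      ∀ᵐ ω ∂μ, κ ω (Z ⁻¹' s ∩ T) = κ ω (Z ⁻¹' s) * κ ω T := by
    intro s hs
    exact ae_of_ae_trim hmWle
      (h (Z ⁻¹' s) T ⟨s, hs, rfl⟩ ⟨{1}, measurableSet_singleton 1, rfl⟩)
  have hq : ∀ᵐ ω ∂μ, ∀ q : ℚ,
      κ ω (Z ⁻¹' (Iio (q:ℝ)) ∩ T) = κ ω (Z ⁻¹' (Iio (q:ℝ))) * κ ω T :=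
    ae_all_iff.2 fun q => hsets _ measurableSet_Iio
  have e1 := condExp_ae_eq_integral_condExpKernel (m := mW) (mΩ := mΩ) hmWle hZBint
  have e2 := condExp_ae_eq_integral_condExpKernel (m := mW) (mΩ := mΩ) hmWle hZint
  have e3 := condExp_ae_eq_integral_condExpKernel (m := mW) (mΩ := mΩ) hmWle hBint
  filter_upwards [hq, e1, e2, e3] with ω hqω h1ω h2ω h3ω
  rw [h1ω, h2ω, h3ω]
  have hBint' : ∫ y, B y ∂(κ ω) = (κ ω T).toReal := by
    have hfe : (fun y => B y) = T.indicator (fun _ => (1:ℝ)) := funext hBind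
    rw [hfe]
    exact integral_indicator_one_eq (m0 := mΩ) (κ ω) hT
  have hmul : ∫ y, Z y * B y ∂(κ ω) = (κ ω T).toReal * ∫ y, Z y ∂(κ ω) := by
    have hfe : (fun y => Z y * B y) = T.indicator Z := funext hZB
    rw [hfe]
    exact integral_restrict_eq_of_iio (m0 := mΩ) (κ ω) hZ hT hqω
  rw [hmul, hBint', mul_comm]

/-- Identification of the average treatment effect. On a probability
space carrying covariates `W`, a binary treatment `A ∈ {0,1}`, and bounded potential
outcomes `Y⁰, Y¹` with observed outcome `Y = A·Y¹ + (1−A)·Y⁰` (consistency), if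
`(Y⁰, Y¹)` is conditionally independent of `A` given `σ(W)` (ignorability) and
`0 < E[A | σ(W)] < 1` almost surely (positivity), then
`E[Y¹ − Y⁰] = E[ E[Y·A | σ(W)] / E[A | σ(W)] − E[Y·(1−A) | σ(W)] / E[(1−A) | σ(W)] ]`,
so the ATE is identified from the observed-data distribution of `(W, A, Y)`. -/
theorem ate_identification {Ω : Type*} [mΩ : MeasurableSpace Ω] [StandardBorelSpace Ω]
    {𝓦 : Type*} [MeasurableSpace 𝓦]
    (μ : Measure Ω) [IsProbabilityMeasure μ]
    (W : Ω → 𝓦) (A Y0 Y1 Y : Ω → ℝ)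
    (hW : Measurable W) (hA : Measurable A)
    (hY0 : Measurable Y0) (hY1 : Measurable Y1)
    (hAbin : ∀ ω, A ω = 0 ∨ A ω = 1)
    (hbdd : ∃ C : ℝ, ∀ ω, |Y0 ω| ≤ C ∧ |Y1 ω| ≤ C)
    (hconsistency : ∀ ω, Y ω = A ω * Y1 ω + (1 - A ω) * Y0 ω)
    (mW : MeasurableSpace Ω)
    (hmW : mW = MeasurableSpace.comap W inferInstance)
    (hmWle : mW ≤ mΩ)
    (hignorability : CondIndepFun mW hmWle (fun ω => (Y0 ω, Y1 ω)) A μ)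
    (hpositivity : ∀ᵐ ω ∂μ, 0 < (μ[A | mW]) ω ∧ (μ[A | mW]) ω < 1) :
    ∫ ω, (Y1 ω - Y0 ω) ∂μ =
      ∫ ω, (μ[fun ω' => Y ω' * A ω' | mW]) ω / (μ[A | mW]) ω -
          (μ[fun ω' => Y ω' * (1 - A ω') | mW]) ω /
            (μ[fun ω' => 1 - A ω' | mW]) ω ∂μ := by
  obtain ⟨C, hC⟩ := hbdd
  have hY0bd : ∀ ω, |Y0 ω| ≤ C := fun ω => (hC ω).1
  have hY1bd : ∀ ω, |Y1 ω| ≤ C := fun ω => (hC ω).2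
  have hA' : @Measurable Ω ℝ mΩ _ (fun ω => 1 - A ω) := measurable_const.sub hA
  have hA1bin : ∀ ω, (1 - A ω) = 0 ∨ (1 - A ω) = 1 := by
    intro ω; rcases hAbin ω with h | h <;> simp [h]
  have hYA : (fun ω' => Y ω' * A ω') = fun ω' => Y1 ω' * A ω' := by
    funext ω; rcases hAbin ω with h | h <;> simp [hconsistency ω, h]
  have hYA' : (fun ω' => Y ω' * (1 - A ω')) = fun ω' => Y0 ω' * (1 - A ω') := by
    funext ω; rcases hAbin ω with h | h <;> simp [hconsistency ω, h]
  have hind1 : CondIndepFun mW hmWle Y1 A μ :=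
    hignorability.comp measurable_snd measurable_id
  have hind0 : CondIndepFun mW hmWle Y0 (fun ω => 1 - A ω) μ :=
    hignorability.comp measurable_fst (measurable_const.sub measurable_id)
  have key1 := condexp_mul_of_condIndepFun_binary (mΩ := mΩ) hY1 hA hY1bd hAbin mW hmWle hind1
  have key0 := condexp_mul_of_condIndepFun_binary (mΩ := mΩ) hY0 hA' hY0bd hA1bin mW hmWle hind0
  have e1 : μ[fun ω' => Y ω' * A ω' | mW] =ᵐ[μ]
      fun ω => (μ[Y1 | mW]) ω * (μ[A | mW]) ω := by
    rw [hYA]; exact key1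
  have e0 : μ[fun ω' => Y ω' * (1 - A ω') | mW] =ᵐ[μ]
      fun ω => (μ[Y0 | mW]) ω * (μ[fun ω' => 1 - A ω' | mW]) ω := by
    rw [hYA']; exact key0
  have hAint : Integrable A μ :=
    Integrable.mono' (integrable_const 1) (Measurable.aestronglyMeasurable (μ := μ) hA)
      (Filter.Eventually.of_forall fun ω => by
        rcases hAbin ω with h | h <;> simp [h])
  have hY0int : Integrable Y0 μ :=
    Integrable.mono' (integrable_const C) (Measurable.aestronglyMeasurable (μ := μ) hY0)
      (Filter.Eventually.of_forall fun ω => by simpa using hY0bd ω)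
  have hY1int : Integrable Y1 μ :=
    Integrable.mono' (integrable_const C) (Measurable.aestronglyMeasurable (μ := μ) hY1)
      (Filter.Eventually.of_forall fun ω => by simpa using hY1bd ω)
  have hsub : μ[fun ω' => 1 - A ω' | mW] =ᵐ[μ] fun ω => 1 - (μ[A | mW]) ω := by
    have h1 : μ[(fun _ => (1:ℝ)) - A | mW] =ᵐ[μ] μ[fun _ => (1:ℝ) | mW] - μ[A | mW] :=
      condExp_sub (integrable_const 1) hAint mW
    have h2 : μ[fun _ => (1:ℝ) | mW] = fun _ => (1:ℝ) := condExp_const hmWle 1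
    filter_upwards [h1] with ω hω
    have : ((fun _ => (1:ℝ)) - A) = fun ω' => 1 - A ω' := rfl
    rw [← this, hω, Pi.sub_apply, h2]
  have hmain : (fun ω => (μ[fun ω' => Y ω' * A ω' | mW]) ω / (μ[A | mW]) ω -
      (μ[fun ω' => Y ω' * (1 - A ω') | mW]) ω / (μ[fun ω' => 1 - A ω' | mW]) ω) =ᵐ[μ]
      fun ω => (μ[Y1 | mW]) ω - (μ[Y0 | mW]) ω := by
    filter_upwards [e1, e0, hsub, hpositivity] with ω h1 h0 hs hp
    have hg0 : (μ[A | mW]) ω ≠ 0 := ne_of_gt hp.1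
    have hg1 : (μ[fun ω' => 1 - A ω' | mW]) ω ≠ 0 := by
      rw [hs]; exact ne_of_gt (sub_pos.2 hp.2)
    simp only [h1, h0]
    rw [mul_div_cancel_right₀ _ hg0, mul_div_cancel_right₀ _ hg1]
  rw [integral_congr_ae hmain, integral_sub integrable_condExp integrable_condExp,
    integral_condExp hmWle, integral_condExp hmWle,
    ← integral_sub hY1int hY0int]
end
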